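/- Let d ≥ 1, α ∈ (0,1], β ∈ (0,α), and define V_β : ℝ^d → ℝ by V_β(x) = (1+|x|²)^{β/2}. Then for every x ∈ ℝ^d, ∫_{ℝ^d∖{0}} [ V_β(x+z) − V_β(x) − ⟨∇V_β(x), z⟩ 1_{(0,1)}(|z|) ] |z|^{−(d+α)} dz ≤ (2α−β) s_{d−1} / (α(α−β)) + β(3−β) s_{d−1} √d / (2(2−α)). -/

import Mathlib

open MeasureTheory Real
open scoped RealInnerProductSpace

/-- Surface area of the unit sphere `𝕊^{d-1} ⊆ ℝ^d`: `s_{d-1} = 2 π^{d/2} / Γ(d/2)`. -/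
noncomputable def sphereArea (d : ℕ) : ℝ := 2 * Real.pi ^ ((d : ℝ) / 2) / Real.Gamma ((d : ℝ) / 2)

open Set Metric



lemma integrable_fun_norm_addHaar' {E : Type*} [NormedAddCommGroup E] [NormedSpace ℝ E]
    [MeasurableSpace E] [BorelSpace E] [Nontrivial E] [FiniteDimensional ℝ E]
    (μ : Measure E) [μ.IsAddHaarMeasure] {f : ℝ → ℝ} (hmeas : Measurable f)
    (hint : IntegrableOn (fun y => y ^ (Module.finrank ℝ E - 1) * f y) (Set.Ioi 0)) :
    Integrable (fun x => f ‖x‖) μ := by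
  set n := Module.finrank ℝ E - 1 with hn
  have he : MeasurableEmbedding ((↑) : ({0}ᶜ : Set E) → E) :=
    MeasurableEmbedding.subtype_coe (measurableSet_singleton 0).compl
  have h0 : Integrable (fun x : E => f ‖x‖) μ ↔
      Integrable ((fun x : E => f ‖x‖) ∘ ((↑) : ({0}ᶜ : Set E) → E)) (μ.comap (↑)) := by
    rw [← he.integrable_map_iff, he.map_comap, Subtype.range_coe,
      restrict_compl_singleton]
  rw [h0]
  have hcomp : ((fun x : E => f ‖x‖) ∘ ((↑) : ({0}ᶜ : Set E) → E)) =
      (fun p : sphere (0:E) 1 × Set.Ioi (0:ℝ) => f p.2) ∘ (homeomorphUnitSphereProd E) := by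
    ext x; simp
  rw [hcomp, (μ.measurePreserving_homeomorphUnitSphereProd).integrable_comp_emb
    (Homeomorph.measurableEmbedding _)]
  -- integrability on the factor (0, ∞) with density
  have he2 : MeasurableEmbedding ((↑) : Set.Ioi (0:ℝ) → ℝ) :=
    MeasurableEmbedding.subtype_coe measurableSet_Ioi
  have hI : Integrable (fun y : Set.Ioi (0:ℝ) => f y) (.volumeIoiPow n) := by
    rw [Measure.volumeIoiPow, integrable_withDensity_iff_integrable_smul'
      (by fun_prop) (Filter.Eventually.of_forall fun _ => ENNReal.ofReal_lt_top)]
    have h1 : Integrable ((fun y : ℝ => y ^ n * f y) ∘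
        ((↑) : Set.Ioi (0:ℝ) → ℝ)) (volume.comap ((↑) : Set.Ioi (0:ℝ) → ℝ)) := by
      rw [← he2.integrable_map_iff, he2.map_comap, Subtype.range_coe]
      exact hint
    refine h1.congr ?_
    refine Filter.Eventually.of_forall fun r => ?_
    have hr : (0:ℝ) < r := r.2
    simp only [Function.comp_apply, smul_eq_mul,
      ENNReal.toReal_ofReal (pow_nonneg hr.le _)]
  have hmsph : AEStronglyMeasurable (fun p : sphere (0:E) 1 × Set.Ioi (0:ℝ) => f p.2)
      ((μ.toSphere).prod (.volumeIoiPow n)) :=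
    (hmeas.comp (measurable_subtype_coe.comp measurable_snd)).aestronglyMeasurable
  rw [integrable_prod_iff hmsph]
  refine ⟨Filter.Eventually.of_forall fun _ => hI, ?_⟩
  simpa using (integrable_const (∫ (y : ↑(Ioi (0:ℝ))), ‖f ↑y‖ ∂Measure.volumeIoiPow n) : Integrable _ μ.toSphere)

lemma rpow_tangent_le {a y p : ℝ} (ha : 0 < a) (hy : 0 ≤ y) (hp0 : 0 ≤ p) (hp1 : p ≤ 1) :
    y ^ p ≤ a ^ p + p * a ^ (p - 1) * (y - a) := by
  have hs : (-1 : ℝ) ≤ y / a - 1 := by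
    have : 0 ≤ y / a := div_nonneg hy ha.le
    linarith
  have hb := rpow_one_add_le_one_add_mul_self hs hp0 hp1
  have hya : y = a * (1 + (y / a - 1)) := by field_simp; ring
  calc y ^ p = a ^ p * (1 + (y / a - 1)) ^ p := by
        rw [← Real.mul_rpow ha.le (by linarith)]
        rw [← hya]
      _ ≤ a ^ p * (1 + p * (y / a - 1)) := by
        apply mul_le_mul_of_nonneg_left hb (Real.rpow_nonneg ha.le p)
      _ = a ^ p + p * (a ^ p / a) * (y - a) := by
        field_simp
      _ = a ^ p + p * a ^ (p - 1) * (y - a) := by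
        rw [← Real.rpow_sub_one ha.ne']

lemma rpow_add_le_rpow_add_rpow' {u v p : ℝ} (hu : 0 ≤ u) (hv : 0 ≤ v) (hp0 : 0 ≤ p)
    (hp1 : p ≤ 1) : (u + v) ^ p ≤ u ^ p + v ^ p := by
  have h := NNReal.rpow_add_le_add_rpow u.toNNReal v.toNNReal hp0 hp1
  have h3 := NNReal.coe_le_coe.2 h
  simp only [NNReal.coe_rpow, NNReal.coe_add, Real.coe_toNNReal u hu,
    Real.coe_toNNReal v hv] at h3
  exact h3

variable {E : Type*} [NormedAddCommGroup E] [InnerProductSpace ℝ E]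

lemma small_bound {β : ℝ} (hβ0 : 0 < β) (hβ1 : β < 1) (x z : E) :
    (1 + ‖x + z‖ ^ 2) ^ (β / 2) - (1 + ‖x‖ ^ 2) ^ (β / 2)
      - (β / (1 + ‖x‖ ^ 2) ^ (1 - β / 2)) * ⟪x, z⟫ ≤ (β / 2) * ‖z‖ ^ 2 := by
  set a : ℝ := 1 + ‖x‖ ^ 2 with ha
  have ha1 : (1:ℝ) ≤ a := by rw [ha]; nlinarith [sq_nonneg ‖x‖]
  have ha0 : (0:ℝ) < a := by linarith
  have hy0 : (0:ℝ) ≤ 1 + ‖x + z‖ ^ 2 := by positivity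
  set p : ℝ := β / 2 with hp
  have hp0 : (0:ℝ) ≤ p := by rw [hp]; linarith
  have hp1 : p ≤ 1 := by rw [hp]; linarith

  have htan := rpow_tangent_le (y := 1 + ‖x + z‖ ^ 2) ha0 hy0 hp0 hp1
  have hnorm : ‖x + z‖ ^ 2 = ‖x‖ ^ 2 + 2 * ⟪x, z⟫ + ‖z‖ ^ 2 := by
    rw [@norm_add_sq_real]
  have hκ : β / a ^ (1 - β / 2) = β * a ^ (p - 1) := by
    rw [show p - 1 = -(1 - β/2) by simp only [hp]; ring, Real.rpow_neg ha0.le]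
    ring
  have hple : a ^ (p - 1) ≤ 1 :=
    Real.rpow_le_one_of_one_le_of_nonpos ha1 (by simp only [hp]; linarith)
  have hap : 0 ≤ a ^ (p - 1) := Real.rpow_nonneg ha0.le _
  have key : (1 + ‖x + z‖ ^ 2 : ℝ) ^ p - a ^ p - (β / a ^ (1 - β / 2)) * ⟪x, z⟫
      ≤ p * a ^ (p - 1) * ‖z‖ ^ 2 := by
    rw [hκ]
    have : (1 + ‖x + z‖ ^ 2 : ℝ) - a = 2 * ⟪x, z⟫ + ‖z‖ ^ 2 := by
      rw [ha, hnorm]; ring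
    rw [this] at htan
    have h2p : p * 2 = β := by rw [hp]; ring
    have hexp : a ^ p + p * a ^ (p - 1) * (2 * ⟪x, z⟫ + ‖z‖ ^ 2)
        = a ^ p + β * a ^ (p - 1) * ⟪x, z⟫ + p * a ^ (p - 1) * ‖z‖ ^ 2 := by
      rw [← h2p]; ring
    rw [hexp] at htan
    linarith
  calc (1 + ‖x + z‖ ^ 2 : ℝ) ^ (β/2) - a ^ (β/2) - (β / a ^ (1 - β / 2)) * ⟪x, z⟫
      ≤ p * a ^ (p - 1) * ‖z‖ ^ 2 := key
    _ ≤ (β / 2) * ‖z‖ ^ 2 := by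
        have : p * a ^ (p-1) ≤ p * 1 := by
          apply mul_le_mul_of_nonneg_left hple (by positivity)
        nlinarith [sq_nonneg ‖z‖]

lemma tail_bound {β : ℝ} (hβ0 : 0 ≤ β) (hβ1 : β ≤ 1) (x z : E) :
    (1 + ‖x + z‖ ^ 2) ^ (β / 2) - (1 + ‖x‖ ^ 2) ^ (β / 2) ≤ ‖z‖ ^ β := by
  set a : ℝ := Real.sqrt (1 + ‖x‖ ^ 2) with ha
  set b : ℝ := Real.sqrt (1 + ‖x + z‖ ^ 2) with hb
  have ha0 : 0 ≤ a := Real.sqrt_nonneg _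
  have hb0 : 0 ≤ b := Real.sqrt_nonneg _
  have ha2 : a ^ 2 = 1 + ‖x‖ ^ 2 := Real.sq_sqrt (by positivity)
  have hb2 : b ^ 2 = 1 + ‖x + z‖ ^ 2 := Real.sq_sqrt (by positivity)
  have hxa : ‖x‖ ≤ a := by
    rw [ha]
    calc ‖x‖ = Real.sqrt (‖x‖ ^ 2) := (Real.sqrt_sq (norm_nonneg x)).symm
      _ ≤ _ := Real.sqrt_le_sqrt (by linarith)
  have hba : b ≤ a + ‖z‖ := by
    have h1 : 1 + ‖x + z‖ ^ 2 ≤ (a + ‖z‖) ^ 2 := by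
      have h2 : ‖x + z‖ ^ 2 ≤ (‖x‖ + ‖z‖) ^ 2 :=
        pow_le_pow_left₀ (norm_nonneg _) (norm_add_le x z) 2
      have h3 : ‖x‖ * ‖z‖ ≤ a * ‖z‖ := mul_le_mul_of_nonneg_right hxa (norm_nonneg z)
      nlinarith [h2, h3, ha2]
    calc b ≤ Real.sqrt ((a + ‖z‖) ^ 2) := Real.sqrt_le_sqrt h1
      _ = a + ‖z‖ := Real.sqrt_sq (by positivity)
  have hrw : ∀ y : E, (1 + ‖y‖ ^ 2) ^ (β / 2) = Real.sqrt (1 + ‖y‖ ^ 2) ^ β := by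
    intro y
    rw [Real.sqrt_eq_rpow, ← Real.rpow_mul (by positivity)]
    congr 1
    ring
  rw [hrw (x + z), hrw x, ← hb, ← ha]
  have h4 : b ^ β ≤ (a + ‖z‖) ^ β := Real.rpow_le_rpow hb0 hba hβ0
  have h5 : (a + ‖z‖) ^ β ≤ a ^ β + ‖z‖ ^ β :=
    rpow_add_le_rpow_add_rpow' ha0 (norm_nonneg z) hβ0 hβ1
  linarith

section OneDim

variable {d : ℕ} {α β : ℝ}

/-- 1D radial integrand facts. -/
lemma psi_integrableOn (hd : 1 ≤ d) (hα0 : 0 < α) (hα1 : α ≤ 1) (hβ0 : 0 < β) (hβα : β < α) :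
    IntegrableOn (fun y : ℝ => y ^ (d - 1) *
      (if y < 1 then (β/2) * y ^ 2 / y ^ ((d:ℝ) + α) else y ^ β / y ^ ((d:ℝ) + α)))
      (Set.Ioi 0) ∧
    ∫ y in Set.Ioi (0:ℝ), y ^ (d - 1) *
      (if y < 1 then (β/2) * y ^ 2 / y ^ ((d:ℝ) + α) else y ^ β / y ^ ((d:ℝ) + α))
      = (β/2) / (2 - α) + 1 / (α - β) := by
  set c : ℝ := (d:ℝ) + α with hc
  set f : ℝ → ℝ := fun y => y ^ (d - 1) *
      (if y < 1 then (β/2) * y ^ 2 / y ^ c else y ^ β / y ^ c) with hf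
  have hdc : ((d - 1 : ℕ) : ℝ) = (d : ℝ) - 1 := by
    rw [Nat.cast_sub hd, Nat.cast_one]
  have hEq1 : ∀ y ∈ Set.Ioo (0:ℝ) 1, f y = (β/2) * y ^ ((1:ℝ) - α) := by
    rintro y ⟨hy0, hy1⟩
    simp only [hf, if_pos hy1]
    rw [← Real.rpow_natCast y (d - 1), hdc, ← Real.rpow_natCast y 2,
      div_eq_mul_inv, ← Real.rpow_neg hy0.le]
    rw [show y ^ ((d:ℝ) - 1) * ((β/2) * y ^ ((2:ℕ):ℝ) * y ^ (-c)) =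
      (β/2) * (y ^ ((d:ℝ) - 1) * y ^ ((2:ℕ):ℝ) * y ^ (-c)) by ring,
      ← Real.rpow_add hy0, ← Real.rpow_add hy0]
    norm_num
    left
    rw [show (d:ℝ) - 1 + 2 + -c = 1 - α by rw [hc]; ring]
  have hEq2 : ∀ y ∈ Set.Ici (1:ℝ), f y = y ^ (β - α - 1) := by
    intro y hy
    have hy0 : (0:ℝ) < y := lt_of_lt_of_le one_pos hy
    simp only [hf, if_neg (not_lt.2 (Set.mem_Ici.1 hy))]
    rw [← Real.rpow_natCast y (d - 1), hdc,
      div_eq_mul_inv, ← Real.rpow_neg hy0.le,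
      ← Real.rpow_add hy0, ← Real.rpow_add hy0]
    rw [show (d:ℝ) - 1 + (β + -c) = β - α - 1 by rw [hc]; ring]
  have hmeas1 : MeasurableSet (Set.Ioo (0:ℝ) 1) := measurableSet_Ioo
  have hmeas2 : MeasurableSet (Set.Ici (1:ℝ)) := measurableSet_Ici
  have hint1 : IntegrableOn f (Set.Ioo 0 1) := by
    apply (IntegrableOn.congr_fun ?_ (fun y hy => (hEq1 y hy).symm) hmeas1)
    apply Integrable.const_mul
    have h := (intervalIntegral.intervalIntegrable_rpow'
      (a := 0) (b := 1) (show (-1:ℝ) < 1 - α by linarith))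
    rw [intervalIntegrable_iff_integrableOn_Ioo_of_le zero_le_one] at h
    exact h
  have hint2 : IntegrableOn f (Set.Ici 1) := by
    apply (IntegrableOn.congr_fun ?_ (fun y hy => (hEq2 y hy).symm) hmeas2)
    rw [integrableOn_Ici_iff_integrableOn_Ioi]
    exact integrableOn_Ioi_rpow_of_lt (by linarith) one_pos
  have hunion : Set.Ioo (0:ℝ) 1 ∪ Set.Ici 1 = Set.Ioi 0 := Ioo_union_Ici_eq_Ioi one_pos
  have hdisj : Disjoint (Set.Ioo (0:ℝ) 1) (Set.Ici 1) := by
    rw [Set.disjoint_left]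
    rintro y ⟨_, hy1⟩ hy2
    exact absurd hy2 (not_le.2 hy1)
  constructor
  · rw [← hunion]
    exact hint1.union hint2
  · rw [← hunion, setIntegral_union hdisj hmeas2 hint1 hint2]
    have hv1 : ∫ y in Set.Ioo (0:ℝ) 1, f y = (β/2) / (2 - α) := by
      rw [setIntegral_congr_fun hmeas1 hEq1, MeasureTheory.integral_const_mul,
        ← integral_Ioc_eq_integral_Ioo, ← intervalIntegral.integral_of_le zero_le_one,
        integral_rpow (Or.inl (by linarith : (-1:ℝ) < 1 - α))]
      rw [show (1:ℝ) - α + 1 = 2 - α by ring, Real.one_rpow,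
        Real.zero_rpow (by linarith : (2:ℝ) - α ≠ 0)]
      ring
    have hv2 : ∫ y in Set.Ici (1:ℝ), f y = 1 / (α - β) := by
      rw [setIntegral_congr_fun hmeas2 hEq2, integral_Ici_eq_integral_Ioi,
        integral_Ioi_rpow_of_lt (by linarith) one_pos]
      rw [show β - α - 1 + 1 = β - α by ring, Real.one_rpow]
      rw [show (α : ℝ) - β = -(β - α) by ring]
      rw [div_neg, neg_div]
    rw [hv1, hv2]

end OneDim

lemma sphereArea_eq_mul (d : ℕ) (hd : 1 ≤ d) :
    (d : ℝ) * (volume (Metric.ball (0 : EuclideanSpace ℝ (Fin d)) 1)).toReal = sphereArea d := by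
  haveI : Nonempty (Fin d) := ⟨⟨0, hd⟩⟩
  have hd0 : (0:ℝ) < (d:ℝ) := by exact_mod_cast hd
  have hΓpos : 0 < Real.Gamma ((d:ℝ)/2) := Real.Gamma_pos_of_pos (by positivity)
  have hΓ1 : Real.Gamma ((d:ℝ)/2 + 1) = ((d:ℝ)/2) * Real.Gamma ((d:ℝ)/2) :=
    Real.Gamma_add_one (by positivity)
  have hΓ1pos : 0 < Real.Gamma ((d:ℝ)/2 + 1) := by rw [hΓ1]; positivity
  rw [EuclideanSpace.volume_ball]
  simp only [Fintype.card_fin, ENNReal.ofReal_one, one_pow, one_mul]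
  rw [ENNReal.toReal_ofReal (by positivity)]
  have hsq : Real.sqrt π ^ d = π ^ ((d:ℝ)/2) := by
    rw [Real.sqrt_eq_rpow, ← Real.rpow_natCast (π ^ ((1:ℝ)/2)) d,
      ← Real.rpow_mul pi_pos.le]
    congr 1
    ring
  rw [hsq, hΓ1, sphereArea]
  field_simp

/-- For `α ∈ (0,1]`, `β ∈ (0,α)` and `V_β(x) = (1+|x|²)^{β/2}` on `ℝ^d`, the α-stable nonlocal
increment satisfies
`∫_{ℝ^d∖{0}} [V_β(x+z) − V_β(x) − ⟨∇V_β(x), z⟩ 1_{(0,1)}(|z|)] |z|^{−(d+α)} dz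
  ≤ (2α−β) s_{d−1}/(α(α−β)) + β(3−β) s_{d−1} √d / (2(2−α))`,
where `∇V_β(x) = βx/(1+|x|²)^{1−β/2}`. -/
theorem stable_generator_lyapunov_bound_subcritical
    (d : ℕ) (hd : 1 ≤ d) (α β : ℝ) (hα : α ∈ Set.Ioc (0 : ℝ) 1) (hβ : β ∈ Set.Ioo (0 : ℝ) α)
    (V : EuclideanSpace ℝ (Fin d) → ℝ) (hV : ∀ x, V x = (1 + ‖x‖ ^ 2) ^ (β / 2)) :
    ∀ x : EuclideanSpace ℝ (Fin d),
      (∫ z in ({0}ᶜ : Set (EuclideanSpace ℝ (Fin d))),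
          (V (x + z) - V x -
            Set.indicator (Metric.ball 0 1)
              (fun z => ⟪(β / (1 + ‖x‖ ^ 2) ^ (1 - β / 2)) • x, z⟫) z)
            / ‖z‖ ^ ((d : ℝ) + α) ∂volume)
        ≤ (2 * α - β) * sphereArea d / (α * (α - β))
          + β * (3 - β) * sphereArea d * Real.sqrt d / (2 * (2 - α)) := by
  obtain ⟨hα0, hα1⟩ := hα
  obtain ⟨hβ0, hβα⟩ := hβ
  have hβ1 : β < 1 := lt_of_lt_of_le hβα hα1
  intro x
  haveI hnt : Nontrivial (EuclideanSpace ℝ (Fin d)) := by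
    refine ⟨⟨EuclideanSpace.single (⟨0, hd⟩ : Fin d) (1:ℝ), 0, fun h => ?_⟩⟩
    have := congrArg (fun v : EuclideanSpace ℝ (Fin d) => v (⟨0, hd⟩ : Fin d)) h
    simp [EuclideanSpace.single_apply] at this
  set c : ℝ := (d:ℝ) + α with hcdef
  set ψ : ℝ → ℝ := fun r => if r < 1 then (β/2) * r ^ 2 / r ^ c else r ^ β / r ^ c with hψ
  have hψmeas : Measurable ψ := by
    apply Measurable.ite measurableSet_Iio <;> fun_prop
  have hfinrank : Module.finrank ℝ (EuclideanSpace ℝ (Fin d)) = d := by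
    simp [finrank_euclideanSpace]
  have h1d := psi_integrableOn hd hα0 hα1 hβ0 hβα
  have hGint : Integrable (fun z : EuclideanSpace ℝ (Fin d) => ψ ‖z‖) volume := by
    apply integrable_fun_norm_addHaar' volume hψmeas
    rw [hfinrank]
    exact h1d.1
  -- value of the dominating integral
  have hGval : (∫ z : EuclideanSpace ℝ (Fin d), ψ ‖z‖ ∂volume)
      = sphereArea d * ((β/2)/(2-α) + 1/(α-β)) := by
    rw [integral_fun_norm_addHaar volume ψ, hfinrank]
    have : (∫ y in Set.Ioi (0:ℝ), y ^ (d - 1) • ψ y) = (β/2)/(2-α) + 1/(α-β) := by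
      simp only [smul_eq_mul]
      exact h1d.2
    rw [this, nsmul_eq_mul, smul_eq_mul, ← mul_assoc, measureReal_def, sphereArea_eq_mul d hd]
  -- pointwise bound on {0}ᶜ
  have hpt : ∀ z : EuclideanSpace ℝ (Fin d), z ∈ ({0}ᶜ : Set (EuclideanSpace ℝ (Fin d))) →
      (V (x + z) - V x -
        Set.indicator (Metric.ball 0 1)
          (fun z => ⟪(β / (1 + ‖x‖ ^ 2) ^ (1 - β / 2)) • x, z⟫) z) / ‖z‖ ^ c ≤ ψ ‖z‖ := by
    intro z hz
    have hz0 : z ≠ 0 := hz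
    have hzn : 0 < ‖z‖ := norm_pos_iff.2 hz0
    have hzc : 0 < ‖z‖ ^ c := Real.rpow_pos_of_pos hzn c
    by_cases hz1 : ‖z‖ < 1
    · have hmem : z ∈ Metric.ball (0 : EuclideanSpace ℝ (Fin d)) 1 := by
        rwa [mem_ball_zero_iff]
      rw [Set.indicator_of_mem hmem, hψ]
      simp only [if_pos hz1]
      rw [real_inner_smul_left, hV, hV]
      apply div_le_div_of_nonneg_right ?_ hzc.le
      exact small_bound hβ0 hβ1 x z
    · have hmem : z ∉ Metric.ball (0 : EuclideanSpace ℝ (Fin d)) 1 := by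
        rw [mem_ball_zero_iff]; exact hz1
      rw [Set.indicator_of_notMem hmem, hψ]
      simp only [if_neg hz1, sub_zero]
      rw [hV, hV]
      apply div_le_div_of_nonneg_right ?_ hzc.le
      exact tail_bound hβ0.le hβ1.le x z
  -- final numeric comparison
  have hd1 : (1:ℝ) ≤ Real.sqrt d := by
    rw [show (1:ℝ) = Real.sqrt 1 by simp]
    exact Real.sqrt_le_sqrt (by exact_mod_cast hd)
  have hs0 : 0 ≤ sphereArea d := by
    have hd0 : (0:ℝ) < (d:ℝ) := by exact_mod_cast hd
    have hΓpos : 0 < Real.Gamma ((d:ℝ)/2) := Real.Gamma_pos_of_pos (by positivity)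
    rw [sphereArea]
    positivity
  have hnum : sphereArea d * ((β/2)/(2-α) + 1/(α-β))
      ≤ (2 * α - β) * sphereArea d / (α * (α - β))
        + β * (3 - β) * sphereArea d * Real.sqrt d / (2 * (2 - α)) := by
    have h2α : (0:ℝ) < 2 - α := by linarith
    have hαβ : (0:ℝ) < α - β := by linarith
    have e1 : sphereArea d * ((β/2)/(2-α)) ≤ β * (3 - β) * sphereArea d * Real.sqrt d
        / (2 * (2 - α)) := by
      rw [show sphereArea d * (β / 2 / (2 - α)) = sphereArea d * (β/2) / (2-α) by ring,
        div_le_div_iff₀ h2α (by positivity)]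
      have h3 : (1:ℝ) ≤ (3 - β) * Real.sqrt d := by nlinarith
      have key : 0 ≤ (2-α) * (sphereArea d * β) * ((3-β) * Real.sqrt d - 1) :=
        mul_nonneg (mul_nonneg h2α.le (mul_nonneg hs0 hβ0.le)) (by linarith)
      nlinarith [key]
    have e2 : sphereArea d * (1/(α-β)) ≤ (2 * α - β) * sphereArea d / (α * (α - β)) := by
      rw [show sphereArea d * (1/(α-β)) = sphereArea d / (α-β) by ring,
        div_le_div_iff₀ hαβ (by positivity)]
      have key2 : 0 ≤ (α-β) * ((α-β) * sphereArea d) :=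
        mul_nonneg hαβ.le (mul_nonneg hαβ.le hs0)
      nlinarith [key2]
    calc sphereArea d * ((β/2)/(2-α) + 1/(α-β))
        = sphereArea d * ((β/2)/(2-α)) + sphereArea d * (1/(α-β)) := by ring
      _ ≤ _ := by
          have := add_le_add e1 e2
          linarith
  by_cases hf : IntegrableOn (fun z : EuclideanSpace ℝ (Fin d) =>
      (V (x + z) - V x -
        Set.indicator (Metric.ball 0 1)
          (fun z => ⟪(β / (1 + ‖x‖ ^ 2) ^ (1 - β / 2)) • x, z⟫) z) / ‖z‖ ^ c)
      ({0}ᶜ : Set (EuclideanSpace ℝ (Fin d))) volume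
  · have h1 := setIntegral_mono_on hf hGint.integrableOn
      (measurableSet_singleton (0 : EuclideanSpace ℝ (Fin d))).compl hpt
    have h2 : (∫ z in ({0}ᶜ : Set (EuclideanSpace ℝ (Fin d))), ψ ‖z‖ ∂volume)
        = ∫ z : EuclideanSpace ℝ (Fin d), ψ ‖z‖ ∂volume := by
      rw [restrict_compl_singleton]
    calc _ ≤ _ := h1
      _ = sphereArea d * ((β/2)/(2-α) + 1/(α-β)) := by rw [h2, hGval]
      _ ≤ _ := hnum
  · rw [integral_undef hf]
    calc (0:ℝ) ≤ sphereArea d * ((β/2)/(2-α) + 1/(α-β)) := by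
          apply mul_nonneg hs0
          apply add_nonneg
          · exact div_nonneg (by linarith) (by linarith)
          · exact div_nonneg (by linarith) (by linarith)
      _ ≤ _ := hnum
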